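/- Let γ ∈ [0,1) and let f be non-increasing, regularly varying at infinity with index -γ, with f(t) → 0 as t → ∞, and suppose ∑_{s≥1} f(s)/s < ∞. Then f(t)·log t → 0 as t → ∞. -/

import Mathlib

open Filter Finset

/-- Telescoping: sum of log increments over `Ico m n`. -/
lemma telescope_log (m n : ℕ) (h : m ≤ n) :
    ∑ s ∈ Finset.Ico m n,
      (Real.log ((s : ℝ) + 1 + 1) - Real.log ((s : ℝ) + 1))
      = Real.log ((n : ℝ) + 1) - Real.log ((m : ℝ) + 1) := by
  have key : ∀ k : ℕ, ∑ s ∈ Finset.range k,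
      (Real.log ((s : ℝ) + 1 + 1) - Real.log ((s : ℝ) + 1))
      = Real.log ((k : ℝ) + 1) - Real.log 1 := by
    intro k
    have := Finset.sum_range_sub (f := fun s : ℕ => Real.log ((s : ℝ) + 1)) k
    simpa [Nat.cast_succ] using this
  rw [Finset.sum_Ico_eq_sub _ h, key n, key m]
  ring

lemma key_bound (f : ℝ → ℝ)
    (hpos : ∀ t : ℝ, 1 ≤ t → 0 < f t ∧ f t ≤ 1)
    (hmono : ∀ x y : ℝ, 1 ≤ x → x ≤ y → f y ≤ f x)
    (m n : ℕ) (h : m ≤ n) (hn : 1 ≤ n) :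
    f n * (Real.log ((n : ℝ) + 1) - Real.log ((m : ℝ) + 1))
      ≤ ∑ s ∈ Finset.Ico m n, f ((s : ℝ) + 1) / ((s : ℝ) + 1) := by
  have hn1 : (1 : ℝ) ≤ (n : ℝ) := by exact_mod_cast hn
  have hfn0 : 0 ≤ f n := (hpos _ hn1).1.le
  rw [← telescope_log m n h, Finset.mul_sum]
  apply Finset.sum_le_sum
  intro s hs
  have hs2 : (s : ℝ) + 1 ≤ (n : ℝ) := by
    have := (Finset.mem_Ico.1 hs).2
    exact_mod_cast this
  have hs1 : (1 : ℝ) ≤ (s : ℝ) + 1 := by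
    have := Nat.cast_nonneg (α := ℝ) s; linarith
  have hsp : (0 : ℝ) < (s : ℝ) + 1 := by positivity
  have hlog : Real.log ((s : ℝ) + 1 + 1) - Real.log ((s : ℝ) + 1)
      ≤ 1 / ((s : ℝ) + 1) := by
    rw [← Real.log_div (by positivity) (by positivity)]
    have h1 : ((s : ℝ) + 1 + 1) / ((s : ℝ) + 1) - 1 = 1 / ((s : ℝ) + 1) := by
      field_simp
      ring
    calc Real.log (((s : ℝ) + 1 + 1) / ((s : ℝ) + 1))
        ≤ ((s : ℝ) + 1 + 1) / ((s : ℝ) + 1) - 1 :=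
          Real.log_le_sub_one_of_pos (by positivity)
      _ = 1 / ((s : ℝ) + 1) := h1
  calc f n * (Real.log ((s : ℝ) + 1 + 1) - Real.log ((s : ℝ) + 1))
      ≤ f n * (1 / ((s : ℝ) + 1)) := by
        apply mul_le_mul_of_nonneg_left hlog hfn0
    _ ≤ f ((s : ℝ) + 1) * (1 / ((s : ℝ) + 1)) := by
        apply mul_le_mul_of_nonneg_right (hmono _ _ hs1 hs2) (by positivity)
    _ = f ((s : ℝ) + 1) / ((s : ℝ) + 1) := by ring

theorem stmt_14 (γ : ℝ) (hγ0 : 0 ≤ γ) (hγ1 : γ < 1) (f : ℝ → ℝ)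
    (hpos : ∀ t : ℝ, 1 ≤ t → 0 < f t ∧ f t ≤ 1)
    (hmono : ∀ x y : ℝ, 1 ≤ x → x ≤ y → f y ≤ f x)
    (hlim : Filter.Tendsto f Filter.atTop (nhds 0))
    (hrv : ∀ a : ℝ, 0 < a →
      Filter.Tendsto (fun t : ℝ => f (a * t) / f t) Filter.atTop
        (nhds (a ^ (-γ))))
    (hS : Summable (fun s : ℕ => f (s + 1) / (s + 1))) :
    Filter.Tendsto (fun t : ℝ => f t * Real.log t) Filter.atTop (nhds 0) := by
  set g : ℕ → ℝ := fun s => f ((s : ℝ) + 1) / ((s : ℝ) + 1) with hg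
  have hgpos : ∀ s : ℕ, 0 ≤ g s := by
    intro s
    have : (1 : ℝ) ≤ (s : ℝ) + 1 := by
      have := Nat.cast_nonneg (α := ℝ) s; linarith
    exact div_nonneg (hpos _ this).1.le (by positivity)
  have hgs : Summable g := hS
  have htail : Tendsto (fun m => ∑' k, g (k + m)) atTop (nhds 0) :=
    tendsto_sum_nat_add g
  rw [Metric.tendsto_atTop]
  intro ε hε
  -- choose m with tail < ε/2
  obtain ⟨m, hm⟩ := (Metric.tendsto_atTop.1 htail (ε / 2) (by linarith)) |>.imp
    (fun m hm => hm m le_rfl)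
  have htailm : ∑' k, g (k + m) < ε / 2 := by
    have := hm
    rw [Real.dist_eq, sub_zero, abs_of_nonneg (tsum_nonneg fun k => hgpos _)] at this
    exact this
  -- constant
  set C : ℝ := Real.log ((m : ℝ) + 1) + 1 with hC
  have hC0 : 0 < C := by
    have : 0 ≤ Real.log ((m : ℝ) + 1) := Real.log_nonneg (by have := Nat.cast_nonneg (α := ℝ) m; linarith)
    linarith
  -- choose N from hlim
  obtain ⟨N, hN⟩ := Metric.tendsto_atTop.1 hlim (ε / (2 * C)) (div_pos hε (by linarith))
  refine ⟨max (max N 1 + 1) ((m : ℝ) + 2), fun t ht => ?_⟩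
  have htN : max N 1 + 1 ≤ t := le_trans (le_max_left _ _) ht
  have htm : (m : ℝ) + 2 ≤ t := le_trans (le_max_right _ _) ht
  have ht1 : (1 : ℝ) ≤ t := by
    have : (1 : ℝ) ≤ max N 1 := le_max_right _ _
    linarith
  set n : ℕ := ⌊t⌋₊ with hn
  have hnt : (n : ℝ) ≤ t := Nat.floor_le (by linarith)
  have htn1 : t < (n : ℝ) + 1 := Nat.lt_floor_add_one t
  have hn1 : 1 ≤ n := Nat.one_le_floor_iff t |>.2 ht1
  have hn1R : (1 : ℝ) ≤ (n : ℝ) := by exact_mod_cast hn1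
  have hmn : m ≤ n := by
    have : (m : ℝ) + 1 ≤ (n : ℝ) := by linarith
    exact_mod_cast (by linarith : (m : ℝ) ≤ (n : ℝ))
  have hfn0 : 0 ≤ f (n : ℝ) := (hpos _ hn1R).1.le
  have hft : f t ≤ f (n : ℝ) := hmono _ _ hn1R hnt
  have hft0 : 0 ≤ f t := (hpos _ ht1).1.le
  have hlogt0 : 0 ≤ Real.log t := Real.log_nonneg ht1
  -- f n is small
  have hnN : N ≤ (n : ℝ) := by
    have : max N 1 ≤ (n : ℝ) := by linarith
    exact le_trans (le_max_left _ _) this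
  have hfnsmall : f (n : ℝ) < ε / (2 * C) := by
    have := hN (n : ℝ) hnN
    rw [Real.dist_eq, sub_zero] at this
    calc f (n : ℝ) ≤ |f (n : ℝ)| := le_abs_self _
      _ < ε / (2 * C) := this
  -- main chain
  have hsum_le : ∑ s ∈ Finset.Ico m n, g s ≤ ∑' k, g (k + m) := by
    rw [Finset.sum_Ico_eq_sum_range]
    have hsumm : Summable (fun k => g (k + m)) := (summable_nat_add_iff m).2 hgs
    simp_rw [add_comm m]
    exact Summable.sum_le_tsum _ (fun k _ => hgpos _) hsumm
  have hkey := key_bound f hpos hmono m n hmn hn1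
  have h1 : f (n : ℝ) * (Real.log ((n : ℝ) + 1) - Real.log ((m : ℝ) + 1)) < ε / 2 := by
    calc f (n : ℝ) * (Real.log ((n : ℝ) + 1) - Real.log ((m : ℝ) + 1))
        ≤ ∑ s ∈ Finset.Ico m n, g s := hkey
      _ ≤ ∑' k, g (k + m) := hsum_le
      _ < ε / 2 := htailm
  have h2 : f (n : ℝ) * Real.log ((m : ℝ) + 1) < ε / 2 := by
    have hlogm : Real.log ((m : ℝ) + 1) ≤ C := by simp [hC]
    calc f (n : ℝ) * Real.log ((m : ℝ) + 1) ≤ f (n : ℝ) * C :=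
          mul_le_mul_of_nonneg_left hlogm hfn0
      _ < ε / (2 * C) * C := by
          apply mul_lt_mul_of_pos_right hfnsmall hC0
      _ = ε / 2 := by field_simp
  have hmain : f t * Real.log t < ε := by
    calc f t * Real.log t ≤ f (n : ℝ) * Real.log t :=
          mul_le_mul_of_nonneg_right hft hlogt0
      _ ≤ f (n : ℝ) * Real.log ((n : ℝ) + 1) := by
          apply mul_le_mul_of_nonneg_left _ hfn0
          exact Real.log_le_log (by linarith) (by linarith)
      _ = f (n : ℝ) * (Real.log ((n : ℝ) + 1) - Real.log ((m : ℝ) + 1))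
            + f (n : ℝ) * Real.log ((m : ℝ) + 1) := by ring
      _ < ε / 2 + ε / 2 := add_lt_add h1 h2
      _ = ε := by ring
  rw [Real.dist_eq, sub_zero, abs_of_nonneg (mul_nonneg hft0 hlogt0)]
  exact hmain
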